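/- Let d ≥ 2 and n ≥ 2, let K₀ be an o-symmetric convex body in ℝ^d, and let 𝒦 = {x_i + τ_i K₀ : i = 1, …, n} (with all τ_i > 0) be a non-separable family of positive homothetic copies of K₀. Then there is a translate of (∑_{i=1}^n τ_i) K₀ that covers ⋃𝒦; indeed, ⋃_{i=1}^n (x_i + τ_i K₀) ⊆ x + (∑_{i=1}^n τ_i) K₀ where x = (∑_{i=1}^n τ_i x_i)/(∑_{i=1}^n τ_i). -/

import Mathlib

open Set Metric Pointwise
open scoped RealInnerProductSpace

/-- A finite family of sets in `ℝ^d` is non-separable (an NS-family) if there is no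
hyperplane disjoint from the union strictly separating some members from all the
remaining members, i.e. there is no nonempty proper index set `I` and hyperplane
`{y | ⟪u, y⟫ = α}` with all members indexed by `I` strictly on one side and all the
others strictly on the other side. -/
def NonSeparableFamily {d n : ℕ} (F : Fin n → Set (EuclideanSpace ℝ (Fin d))) : Prop :=
  ¬ (∃ (I : Finset (Fin n)) (u : EuclideanSpace ℝ (Fin d)) (α : ℝ),
      I.Nonempty ∧ I ≠ Finset.univ ∧ u ≠ 0 ∧
      (∀ i ∈ I, ∀ y ∈ F i, ⟪u, y⟫ < α) ∧
      (∀ i ∉ I, ∀ y ∈ F i, α < ⟪u, y⟫))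

private lemma list_exists_max {α : Type*} (f : α → ℝ) :
    ∀ (l : List α), l ≠ [] → ∃ p ∈ l, ∀ q ∈ l, f q ≤ f p
  | [], h => absurd rfl h
  | [a], _ => ⟨a, List.mem_singleton_self a, by simp⟩
  | a :: b :: t, _ => by
    obtain ⟨p, hp, hmax⟩ := list_exists_max f (b :: t) (by simp)
    rcases le_total (f p) (f a) with h | h
    · exact ⟨a, by simp, by
        intro q hq
        rcases List.mem_cons.1 hq with rfl | hq
        · exact le_refl _
        · exact (hmax q hq).trans h⟩
    · exact ⟨p, List.mem_cons_of_mem _ hp, by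
        intro q hq
        rcases List.mem_cons.1 hq with rfl | hq
        · exact h
        · exact hmax q hq⟩

private lemma oneD : ∀ (N : ℕ) (l : List (ℝ × ℝ)), l.length ≤ N →
    (∀ p ∈ l, 0 < p.2) →
    (∀ α : ℝ, (∃ p ∈ l, p.1 + p.2 < α) → (∃ p ∈ l, α < p.1 - p.2) →
        ∃ p ∈ l, p.1 - p.2 ≤ α ∧ α ≤ p.1 + p.2) →
    ∀ p ∈ l, p.1 + p.2 ≤
      (l.map (fun p => p.2 * p.1)).sum / (l.map Prod.snd).sum + (l.map Prod.snd).sum := by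
  intro N
  induction N with
  | zero =>
    intro l hl _ _ p hp
    rw [Nat.le_zero, List.length_eq_zero_iff] at hl
    subst hl; simp at hp
  | succ N ih =>
    intro l hlen hr hconn
    rcases hlist : l with _ | ⟨a, t0⟩
    · intro p hp; simp at hp
    rcases t0 with _ | ⟨b, t⟩
    · -- singleton
      intro p₀ hp₀
      rw [List.mem_singleton] at hp₀
      subst hp₀
      have hq : 0 < p₀.2 := hr p₀ (hlist ▸ List.mem_singleton_self _)
      subst hlist
      simp only [List.map_singleton, List.sum_singleton]
      rw [mul_comm, mul_div_assoc, div_self hq.ne', mul_one]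
    subst hlist
    set l : List (ℝ × ℝ) := a :: b :: t with hl
    -- find p maximizing p.1 + p.2
    obtain ⟨p, hp, hpmax⟩ := list_exists_max (fun p : ℝ × ℝ => p.1 + p.2) l (by simp [hl])
    have hep : l.erase p ≠ [] := by
      have h1 : (l.erase p).length = l.length - 1 := List.length_erase_of_mem hp
      intro h
      rw [h] at h1
      simp [hl] at h1
    obtain ⟨q, hq, hqmax⟩ := list_exists_max (fun p : ℝ × ℝ => p.1 + p.2) (l.erase p) hep
    have hql : q ∈ l := List.mem_of_mem_erase hq
    have hrp : 0 < p.2 := hr p hp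
    have hrq : 0 < q.2 := hr q hql
    -- p and q intersect
    have hinter : p.1 - p.2 ≤ q.1 + q.2 := by
      by_contra hsep
      push_neg at hsep
      set α := ((q.1 + q.2) + (p.1 - p.2)) / 2 with hα
      have hα1 : q.1 + q.2 < α := by rw [hα]; linarith
      have hα2 : α < p.1 - p.2 := by rw [hα]; linarith
      obtain ⟨s, hs, hs1, hs2⟩ := hconn α ⟨q, hql, hα1⟩ ⟨p, hp, hα2⟩
      by_cases hsp : s = p
      · subst hsp; linarith
      · have hse : s ∈ l.erase p := (List.mem_erase_of_ne hsp).2 hs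
        have := hqmax s hse
        linarith
    have hinter' : q.1 - q.2 ≤ p.1 + p.2 := by
      have := hpmax q hql
      linarith
    set t' : List (ℝ × ℝ) := (l.erase p).erase q with ht'
    set m : ℝ × ℝ := ((p.2 * p.1 + q.2 * q.1) / (p.2 + q.2), p.2 + q.2) with hm
    set l' : List (ℝ × ℝ) := m :: t' with hl'
    have hab : 0 < p.2 + q.2 := by linarith
    have hBEq : (instBEqOfDecidableEq : BEq (ℝ × ℝ)) = instBEqProd := by
      apply beq_ext
      intro x y
      show decide (x = y) = (decide (x.1 = y.1) && decide (x.2 = y.2))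
      rw [decide_eq_decide.2 Prod.ext_iff, Bool.decide_and]
    have hperm : List.Perm l (p :: q :: t') := by
      have h1 := List.perm_cons_erase hp
      have h2 := List.perm_cons_erase hq
      exact h1.trans (h2.cons p)
    -- interval inclusions
    have hpu : p.1 + p.2 ≤ m.1 + m.2 := by
      have h1 : p.1 + p.2 - (p.2 + q.2) ≤ (p.2 * p.1 + q.2 * q.1) / (p.2 + q.2) := by
        rw [le_div_iff₀ hab]
        nlinarith [mul_nonneg hrq.le (by linarith : (0:ℝ) ≤ q.1 - p.1 + p.2 + q.2)]
      simp only [hm]; linarith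
    have hpl : m.1 - m.2 ≤ p.1 - p.2 := by
      have h1 : (p.2 * p.1 + q.2 * q.1) / (p.2 + q.2) ≤ p.1 - p.2 + (p.2 + q.2) := by
        rw [div_le_iff₀ hab]
        nlinarith [mul_nonneg hrq.le (by linarith : (0:ℝ) ≤ p.1 - q.1 + p.2 + q.2)]
      simp only [hm]; linarith
    have hqu : q.1 + q.2 ≤ m.1 + m.2 := by
      have h1 : q.1 + q.2 - (p.2 + q.2) ≤ (p.2 * p.1 + q.2 * q.1) / (p.2 + q.2) := by
        rw [le_div_iff₀ hab]
        nlinarith [mul_nonneg hrp.le (by linarith : (0:ℝ) ≤ p.1 - q.1 + p.2 + q.2)]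
      simp only [hm]; linarith
    have hql' : m.1 - m.2 ≤ q.1 - q.2 := by
      have h1 : (p.2 * p.1 + q.2 * q.1) / (p.2 + q.2) ≤ q.1 - q.2 + (p.2 + q.2) := by
        rw [div_le_iff₀ hab]
        nlinarith [mul_nonneg hrp.le (by linarith : (0:ℝ) ≤ q.1 - p.1 + p.2 + q.2)]
      simp only [hm]; linarith
    -- sums agree
    have hsr : (l.map Prod.snd).sum = (l'.map Prod.snd).sum := by
      rw [(hperm.map Prod.snd).sum_eq]
      simp only [hl', List.map_cons, List.sum_cons, hm]
      ring
    have hsrc : (l.map (fun p => p.2 * p.1)).sum = (l'.map (fun p => p.2 * p.1)).sum := by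
      rw [(hperm.map (fun p : ℝ × ℝ => p.2 * p.1)).sum_eq]
      simp only [hl', List.map_cons, List.sum_cons, hm]
      rw [mul_div_cancel₀ _ hab.ne']
      ring
    -- hypotheses for l'
    have hr' : ∀ s ∈ l', 0 < s.2 := by
      intro s hs
      rcases List.mem_cons.1 hs with rfl | hs
      · exact hab
      · exact hr s (List.mem_of_mem_erase (List.mem_of_mem_erase hs))
    have hconn' : ∀ α : ℝ, (∃ s ∈ l', s.1 + s.2 < α) → (∃ s ∈ l', α < s.1 - s.2) →
        ∃ s ∈ l', s.1 - s.2 ≤ α ∧ α ≤ s.1 + s.2 := by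
      intro α h1 h2
      have h1l : ∃ s ∈ l, s.1 + s.2 < α := by
        obtain ⟨s, hs, hslt⟩ := h1
        rcases List.mem_cons.1 hs with rfl | hs
        · exact ⟨p, hp, by linarith⟩
        · exact ⟨s, List.mem_of_mem_erase (List.mem_of_mem_erase hs), hslt⟩
      have h2l : ∃ s ∈ l, α < s.1 - s.2 := by
        obtain ⟨s, hs, hslt⟩ := h2
        rcases List.mem_cons.1 hs with rfl | hs
        · exact ⟨p, hp, by linarith⟩
        · exact ⟨s, List.mem_of_mem_erase (List.mem_of_mem_erase hs), hslt⟩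
      obtain ⟨s, hs, hs1, hs2⟩ := hconn α h1l h2l
      rcases List.mem_cons.1 (hperm.mem_iff.1 hs) with rfl | hs'
      · exact ⟨m, List.mem_cons_self, by constructor <;> linarith⟩
      rcases List.mem_cons.1 hs' with rfl | hs''
      · exact ⟨m, List.mem_cons_self, by constructor <;> linarith⟩
      · exact ⟨s, List.mem_cons_of_mem _ hs'', hs1, hs2⟩
    have hlen' : l'.length ≤ N := by
      have := hperm.length_eq
      simp only [List.length_cons] at this
      simp only [hl', List.length_cons]
      omega
    have key := ih l' hlen' hr' hconn'
    intro p₀ hp₀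
    rw [hsr, hsrc]
    rcases List.mem_cons.1 (hperm.mem_iff.1 hp₀) with rfl | hs'
    · exact le_trans (by linarith) (key m (List.mem_cons_self))
    rcases List.mem_cons.1 hs' with rfl | hs''
    · exact le_trans (by linarith) (key m (List.mem_cons_self))
    · exact key p₀ (List.mem_cons_of_mem _ hs'')

/-- **Bezdek–Lángi.** The Goodman–Goodman theorem for `o`-symmetric convex bodies:
if `𝒦 = {xᵢ + τᵢ K₀}` is a non-separable family of positive homothets of an
`o`-symmetric convex body `K₀` in `ℝ^d` (`d ≥ 2`, `n ≥ 2`), then a translate of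
`(∑ τᵢ) K₀` covers `⋃ 𝒦`; indeed `⋃ 𝒦 ⊆ x + (∑ τᵢ) K₀` where
`x = (∑ τᵢ xᵢ)/(∑ τᵢ)`. -/
theorem stmt_3 (d n : ℕ) (hd : 2 ≤ d) (hn : 2 ≤ n)
    (K₀ : Set (EuclideanSpace ℝ (Fin d)))
    (hKconv : Convex ℝ K₀) (hKcpt : IsCompact K₀) (hKint : (interior K₀).Nonempty)
    (hKsym : K₀ = -K₀)
    (x : Fin n → EuclideanSpace ℝ (Fin d)) (τ : Fin n → ℝ) (hτ : ∀ i, 0 < τ i)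
    (hns : NonSeparableFamily (fun i => x i +ᵥ τ i • K₀)) :
    (∃ t : EuclideanSpace ℝ (Fin d),
        (⋃ i, x i +ᵥ τ i • K₀) ⊆ t +ᵥ (∑ i, τ i) • K₀) ∧
    (⋃ i, x i +ᵥ τ i • K₀) ⊆
      ((∑ i, τ i)⁻¹ • ∑ i, τ i • x i) +ᵥ (∑ i, τ i) • K₀ := by
  classical
  have hK0ne : K₀.Nonempty := hKint.mono interior_subset
  have hTpos : 0 < ∑ i, τ i := Finset.sum_pos (fun i _ => hτ i) ⟨⟨0, by omega⟩, Finset.mem_univ _⟩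
  -- 0 is in the interior of K₀
  have h0 : (0 : EuclideanSpace ℝ (Fin d)) ∈ interior K₀ := by
    obtain ⟨p, hp⟩ := hKint
    have hnp : -p ∈ K₀ := by
      rw [hKsym]; exact Set.neg_mem_neg.2 (interior_subset hp)
    have h2 := hKconv.combo_interior_self_mem_interior hp hnp
      (by norm_num : (0:ℝ) < 1/2) (by norm_num : (0:ℝ) ≤ 1/2) (by norm_num)
    simpa using h2
  obtain ⟨ε, hε, hball⟩ := Metric.mem_nhds_iff.1 (mem_interior_iff_mem_nhds.1 h0)
  have main : (⋃ i, x i +ᵥ τ i • K₀) ⊆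
      ((∑ i, τ i)⁻¹ • ∑ i, τ i • x i) +ᵥ (∑ i, τ i) • K₀ := by
    intro y hy
    rw [Set.mem_iUnion] at hy
    obtain ⟨j, hyj⟩ := hy
    have key : ∀ u : EuclideanSpace ℝ (Fin d), u ≠ 0 →
        ∀ z₀ ∈ K₀, (∀ w ∈ K₀, ⟪u, w⟫ ≤ ⟪u, z₀⟫) →
        ⟪u, y⟫ ≤ ⟪u, ∑ i, τ i • x i⟫ / (∑ i, τ i) + (∑ i, τ i) * ⟪u, z₀⟫ := by
      intro u hu z₀ hz₀ hmax
      have hpos : 0 < ⟪u, z₀⟫ := by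
        have hun : 0 < ‖u‖ := norm_pos_iff.2 hu
        have hv : (ε / 2 / ‖u‖) • u ∈ K₀ := by
          apply hball
          rw [mem_ball_zero_iff, norm_smul]
          rw [Real.norm_eq_abs, abs_of_pos (by positivity)]
          rw [div_mul_cancel₀ _ hun.ne']
          linarith
        calc (0:ℝ) < (ε / 2 / ‖u‖) * ⟪u, u⟫ := by
              rw [real_inner_self_eq_norm_sq]
              positivity
          _ = ⟪u, (ε / 2 / ‖u‖) • u⟫ := (real_inner_smul_right _ _ _).symm
          _ ≤ ⟪u, z₀⟫ := hmax _ hv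
      set h : ℝ := ⟪u, z₀⟫ with hh
      set l : List (ℝ × ℝ) := List.ofFn (fun i : Fin n => (⟪u, x i⟫, τ i * h)) with hldef
      have hmem : ∀ i : Fin n, (⟪u, x i⟫, τ i * h) ∈ l := fun i => by
        rw [hldef, List.mem_ofFn]; exact ⟨i, rfl⟩
      have hmem' : ∀ p ∈ l, ∃ i : Fin n, p = (⟪u, x i⟫, τ i * h) := by
        intro p hp
        rw [hldef, List.mem_ofFn] at hp
        obtain ⟨i, hi⟩ := hp
        exact ⟨i, hi.symm⟩
      have hr : ∀ p ∈ l, 0 < p.2 := by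
        intro p hp
        obtain ⟨i, rfl⟩ := hmem' p hp
        exact mul_pos (hτ i) hpos
      have hupper : ∀ i : Fin n, ∀ w ∈ x i +ᵥ τ i • K₀, ⟪u, w⟫ ≤ ⟪u, x i⟫ + τ i * h := by
        intro i w hw
        obtain ⟨b, hb, rfl⟩ := Set.mem_vadd_set.1 hw
        obtain ⟨z, hz, rfl⟩ := Set.mem_smul_set.1 hb
        rw [vadd_eq_add, inner_add_right, real_inner_smul_right]
        have := hmax z hz
        have h2 : τ i * ⟪u, z⟫ ≤ τ i * h := mul_le_mul_of_nonneg_left this (hτ i).le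
        linarith
      have hlower : ∀ i : Fin n, ∀ w ∈ x i +ᵥ τ i • K₀, ⟪u, x i⟫ - τ i * h ≤ ⟪u, w⟫ := by
        intro i w hw
        obtain ⟨b, hb, rfl⟩ := Set.mem_vadd_set.1 hw
        obtain ⟨z, hz, rfl⟩ := Set.mem_smul_set.1 hb
        rw [vadd_eq_add, inner_add_right, real_inner_smul_right]
        have hnz : -z ∈ K₀ := by rw [hKsym]; exact Set.neg_mem_neg.2 hz
        have := hmax _ hnz
        rw [inner_neg_right] at this
        have h2 : τ i * (-h) ≤ τ i * ⟪u, z⟫ := mul_le_mul_of_nonneg_left (by linarith) (hτ i).le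
        have h3 : τ i * (-h) = -(τ i * h) := by ring
        linarith
      have hconn : ∀ α : ℝ, (∃ p ∈ l, p.1 + p.2 < α) → (∃ p ∈ l, α < p.1 - p.2) →
          ∃ p ∈ l, p.1 - p.2 ≤ α ∧ α ≤ p.1 + p.2 := by
        intro α h1 h2
        by_contra hc
        push_neg at hc
        have hdich : ∀ i : Fin n, ⟪u, x i⟫ + τ i * h < α ∨ α < ⟪u, x i⟫ - τ i * h := by
          intro i
          rcases le_or_gt (⟪u, x i⟫ - τ i * h) α with hle | hgt
          · exact Or.inl (hc _ (hmem i) hle)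
          · exact Or.inr hgt
        apply hns
        refine ⟨Finset.univ.filter (fun i => ⟪u, x i⟫ + τ i * h < α), u, α, ?_, ?_, hu, ?_, ?_⟩
        · obtain ⟨p, hp, hlt⟩ := h1
          obtain ⟨i, rfl⟩ := hmem' p hp
          exact ⟨i, Finset.mem_filter.2 ⟨Finset.mem_univ _, hlt⟩⟩
        · obtain ⟨p, hp, hlt⟩ := h2
          obtain ⟨i, rfl⟩ := hmem' p hp
          intro hEq
          have hiI : i ∈ Finset.univ.filter (fun i => ⟪u, x i⟫ + τ i * h < α) := by
            rw [hEq]; exact Finset.mem_univ i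
          have h3 := (Finset.mem_filter.1 hiI).2
          have h4 := mul_pos (hτ i) hpos
          simp only at h3 hlt
          linarith
        · intro i hi w hw
          have h3 := (Finset.mem_filter.1 hi).2
          exact lt_of_le_of_lt (hupper i w hw) h3
        · intro i hi w hw
          rcases hdich i with hcase | hcase
          · exact absurd (Finset.mem_filter.2 ⟨Finset.mem_univ i, hcase⟩) hi
          · exact lt_of_lt_of_le hcase (hlower i w hw)
      have hb0 := oneD n l (by rw [hldef]; simp) hr hconn _ (hmem j)
      have hb : ⟪u, x j⟫ + τ j * h ≤
          (l.map (fun p => p.2 * p.1)).sum / (l.map Prod.snd).sum + (l.map Prod.snd).sum := hb0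
      have hs1 : (l.map Prod.snd).sum = (∑ i, τ i) * h := by
        rw [hldef, List.map_ofFn, List.sum_ofFn, Finset.sum_mul]
        simp [Function.comp]
      have hs2 : (l.map (fun p => p.2 * p.1)).sum = h * ⟪u, ∑ i, τ i • x i⟫ := by
        rw [hldef, List.map_ofFn, List.sum_ofFn, inner_sum, Finset.mul_sum]
        refine Finset.sum_congr rfl fun i _ => ?_
        simp only [Function.comp_apply]
        rw [real_inner_smul_right]
        ring
      rw [hs1, hs2] at hb
      have h4 : h * ⟪u, ∑ i, τ i • x i⟫ / ((∑ i, τ i) * h) = ⟪u, ∑ i, τ i • x i⟫ / (∑ i, τ i) := by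
        rw [mul_comm (∑ i, τ i) h, mul_div_mul_left _ _ hpos.ne']
      rw [h4] at hb
      have h5 : ⟪u, y⟫ ≤ ⟪u, x j⟫ + τ j * h := hupper j y hyj
      linarith
    -- now the membership
    have hw : (∑ i, τ i)⁻¹ • (y - (∑ i, τ i)⁻¹ • ∑ i, τ i • x i) ∈ K₀ := by
      by_contra hnot
      obtain ⟨f, c, hfc, hcx⟩ := geometric_hahn_banach_closed_point hKconv hKcpt.isClosed hnot
      set u := (InnerProductSpace.toDual ℝ (EuclideanSpace ℝ (Fin d))).symm f with hudef
      have hinner : ∀ w, ⟪u, w⟫ = f w := fun w => by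
        rw [hudef, InnerProductSpace.toDual_symm_apply]
      have hu : u ≠ 0 := by
        intro h0'
        obtain ⟨z, hz⟩ := hK0ne
        have ha := hfc z hz
        have hb' := hcx
        rw [← hinner] at ha hb'
        rw [h0'] at ha hb'
        simp only [inner_zero_left] at ha hb'
        linarith
      obtain ⟨z₀, hz₀, hmax⟩ := hKcpt.exists_isMaxOn hK0ne
        ((continuous_const.inner continuous_id).continuousOn :
          ContinuousOn (fun w => ⟪u, w⟫) K₀)
      have hkey := key u hu z₀ hz₀ (fun w hw => hmax hw)
      have e1 : ⟪u, (∑ i, τ i)⁻¹ • (y - (∑ i, τ i)⁻¹ • ∑ i, τ i • x i)⟫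
          = (∑ i, τ i)⁻¹ * (⟪u, y⟫ - (∑ i, τ i)⁻¹ * ⟪u, ∑ i, τ i • x i⟫) := by
        rw [real_inner_smul_right, inner_sub_right, real_inner_smul_right]
      have e2 : ⟪u, z₀⟫ < (∑ i, τ i)⁻¹ * (⟪u, y⟫ - (∑ i, τ i)⁻¹ * ⟪u, ∑ i, τ i • x i⟫) := by
        rw [← e1, hinner, hinner]
        exact (hfc z₀ hz₀).trans hcx
      have e3 := mul_lt_mul_of_pos_left e2 hTpos
      rw [← mul_assoc, mul_inv_cancel₀ hTpos.ne', one_mul] at e3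
      rw [div_eq_inv_mul] at hkey
      linarith
    rw [Set.mem_vadd_set]
    refine ⟨y - (∑ i, τ i)⁻¹ • ∑ i, τ i • x i, ?_, by rw [vadd_eq_add]; abel⟩
    rw [Set.mem_smul_set_iff_inv_smul_mem₀ hTpos.ne']
    exact hw
  exact ⟨⟨(∑ i, τ i)⁻¹ • ∑ i, τ i • x i, main⟩, main⟩
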